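/- For n ≥ 8, if G is an n-vertex triangle-free graph that is not traceable, then e(G) ≤ e(K_{⌊n/2⌋-1, ⌈n/2⌉+1}), that is, e(G) ≤ n²/4 - 1 if n is even and e(G) ≤ (n²-9)/4 if n is odd; and the complete bipartite graph K_{⌊n/2⌋-1, ⌈n/2⌉+1} is the unique graph attaining equality. -/

import Mathlib

open Finset

variable {V : Type} [Fintype V] [DecidableEq V] (G : SimpleGraph V) [DecidableRel G.Adj]

omit [Fintype V] [DecidableEq V] [DecidableRel G.Adj] in
lemma walk_of_chain' :
    ∀ (a : V) (l : List V), List.Chain G.Adj a l →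
      ∃ (w : V) (p : G.Walk a w), p.support = a :: l := by
  intro a l
  induction l generalizing a with
  | nil => intro _; exact ⟨a, SimpleGraph.Walk.nil, rfl⟩
  | cons b l ih =>
    intro h
    simp only [List.Chain, List.chain_cons] at h
    obtain ⟨w, p, hp⟩ := ih b h.2
    exact ⟨w, SimpleGraph.Walk.cons h.1 p, by simp [hp]⟩

omit [DecidableRel G.Adj] in
lemma ham_of_list (L : List V) (hc : L.Chain' G.Adj) (hnd : L.Nodup)
    (hl : L.length = Fintype.card V) (hpos : 0 < Fintype.card V) :
    ∃ (u w : V) (p : G.Walk u w), p.IsHamiltonian := by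
  match L, hc, hnd, hl with
  | [], _, _, hl => simp at hl; omega
  | (a :: l), hc, hnd, hl =>
    obtain ⟨w, p, hp⟩ := walk_of_chain' G a l hc
    refine ⟨a, w, p, fun v => ?_⟩
    rw [hp]
    apply List.count_eq_one_of_mem hnd
    have : (a :: l).toFinset = Finset.univ := by
      apply Finset.eq_univ_of_card
      rw [List.toFinset_card_of_nodup hnd, hl]
    rw [← List.mem_toFinset, this]
    exact Finset.mem_univ v

omit [DecidableRel G.Adj] in
lemma interleave_ham (LA LB : List V) (d : V)
    (hlen : LA.length = LB.length ∨ LA.length = LB.length + 1)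
    (hnA : LA.Nodup) (hnB : LB.Nodup) (hdisj : ∀ v ∈ LA, v ∉ LB)
    (htot : LA.length + LB.length = Fintype.card V)
    (hpos : 0 < Fintype.card V)
    (hadj : ∀ (ja jb : ℕ) (hja : ja < LA.length) (hjb : jb < LB.length),
      jb ≤ ja → ja ≤ jb + 1 → G.Adj LA[ja] LB[jb]) :
    ∃ (u w : V) (p : G.Walk u w), p.IsHamiltonian := by
  set n' := LA.length + LB.length with hn'def
  set f : ℕ → V := fun i => if i % 2 = 0 then LA.getD (i/2) d else LB.getD (i/2) d with hfdef
  set L : List V := (List.range n').map f with hLdef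
  have hLlen : L.length = n' := by rw [hLdef, List.length_map, List.length_range]
  have hbA : ∀ i, i < n' → i % 2 = 0 → i / 2 < LA.length := by
    intro i hi hpar; omega
  have hbB : ∀ i, i < n' → i % 2 = 1 → i / 2 < LB.length := by
    intro i hi hpar; omega
  have hfA : ∀ (i : ℕ) (hi : i < n') (hp : i % 2 = 0), f i = LA[i/2]'(hbA i hi hp) := by
    intro i hi hp
    rw [hfdef]
    simp only [hp]
    rw [if_pos trivial, List.getD_eq_getElem _ _ (hbA i hi hp)]
  have hfB : ∀ (i : ℕ) (hi : i < n') (hp : i % 2 = 1), f i = LB[i/2]'(hbB i hi hp) := by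
    intro i hi hp
    rw [hfdef]
    simp only [hp]
    rw [if_neg (by omega)]
    rw [List.getD_eq_getElem _ _ (hbB i hi hp)]
  have hchain : L.Chain' G.Adj := by
    simp only [List.Chain']
    rw [List.isChain_iff_getElem]
    intro i hi
    rw [hLlen] at hi
    simp only [hLdef, List.get_eq_getElem, List.getElem_map, List.getElem_range]
    rcases Nat.even_or_odd i with he | ho
    · have hp0 : i % 2 = 0 := Nat.even_iff.mp he
      have hp1 : (i+1) % 2 = 1 := by omega
      rw [hfA i (by omega) hp0, hfB (i+1) (by omega) hp1]
      exact hadj (i/2) ((i+1)/2) _ _ (by omega) (by omega)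
    · have hp0 : i % 2 = 1 := Nat.odd_iff.mp ho
      have hp1 : (i+1) % 2 = 0 := by omega
      rw [hfB i (by omega) hp0, hfA (i+1) (by omega) hp1]
      exact (hadj ((i+1)/2) (i/2) _ _ (by omega) (by omega)).symm
  have hnodup : L.Nodup := by
    rw [hLdef]
    refine List.Nodup.map_on ?_ List.nodup_range
    intro x hx y hy hxy
    rw [List.mem_range] at hx hy
    rcases Nat.even_or_odd x with hex | hox <;> rcases Nat.even_or_odd y with hey | hoy
    · have px := Nat.even_iff.mp hex; have py := Nat.even_iff.mp hey
      rw [hfA x hx px, hfA y hy py] at hxy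
      have hinj := List.nodup_iff_injective_get.mp hnA
      have : x/2 = y/2 := by
        have h := hinj (a₁ := ⟨x/2, hbA x hx px⟩) (a₂ := ⟨y/2, hbA y hy py⟩)
          (by simp only [List.get_eq_getElem]; exact hxy)
        exact Fin.mk.inj_iff.mp h
      omega
    · rw [hfA x hx (Nat.even_iff.mp hex), hfB y hy (Nat.odd_iff.mp hoy)] at hxy
      have h1 : LA[x/2]'(hbA x hx (Nat.even_iff.mp hex)) ∈ LA := List.getElem_mem _
      have h2 : LA[x/2]'(hbA x hx (Nat.even_iff.mp hex)) ∈ LB := by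
        rw [hxy]; exact List.getElem_mem _
      exact absurd h2 (hdisj _ h1)
    · rw [hfB x hx (Nat.odd_iff.mp hox), hfA y hy (Nat.even_iff.mp hey)] at hxy
      have h1 : LA[y/2]'(hbA y hy (Nat.even_iff.mp hey)) ∈ LA := List.getElem_mem _
      have h2 : LA[y/2]'(hbA y hy (Nat.even_iff.mp hey)) ∈ LB := by
        rw [← hxy]; exact List.getElem_mem _
      exact absurd h2 (hdisj _ h1)
    · have px := Nat.odd_iff.mp hox; have py := Nat.odd_iff.mp hoy
      rw [hfB x hx px, hfB y hy py] at hxy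
      have hinj := List.nodup_iff_injective_get.mp hnB
      have : x/2 = y/2 := by
        have h := hinj (a₁ := ⟨x/2, hbB x hx px⟩) (a₂ := ⟨y/2, hbB y hy py⟩)
          (by simp only [List.get_eq_getElem]; exact hxy)
        exact Fin.mk.inj_iff.mp h
      omega
  exact ham_of_list G L hchain hnodup (by omega) hpos

variable {V : Type} [Fintype V] [DecidableEq V] (G : SimpleGraph V) [DecidableRel G.Adj]

lemma iso_cbg (A : Finset V) (a b : ℕ) (hA : A.card = b) (hAc : Aᶜ.card = a)
    (hcross : ∀ u v, u ∈ Aᶜ → v ∈ A → G.Adj u v)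
    (hAind : ∀ u v, u ∈ A → v ∈ A → ¬ G.Adj u v)
    (hBind : ∀ u v, u ∈ Aᶜ → v ∈ Aᶜ → ¬ G.Adj u v) :
    Nonempty (G ≃g completeBipartiteGraph (Fin a) (Fin b)) := by
  classical
  let eL : {x // x ∈ Aᶜ} ≃ Fin a := (Aᶜ.equivFin).trans (finCongr hAc)
  let eR : {x // ¬ x ∈ Aᶜ} ≃ Fin b :=
    (Equiv.subtypeEquivRight (fun x => by simp)).trans ((A.equivFin).trans (finCongr hA))
  let e : V ≃ Fin a ⊕ Fin b :=
    (Equiv.sumCompl (fun v => v ∈ Aᶜ)).symm.trans (Equiv.sumCongr eL eR)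
  have heL : ∀ (u : V) (h : u ∈ Aᶜ), e u = Sum.inl (eL ⟨u, h⟩) := by
    intro u h
    show (Equiv.sumCongr eL eR) ((Equiv.sumCompl _).symm u) = _
    rw [show (Equiv.sumCompl (fun v => v ∈ Aᶜ)).symm u = Sum.inl ⟨u, h⟩ by
      simp only [Equiv.sumCompl, Equiv.coe_fn_symm_mk]
      rw [dif_pos h]]
    rfl
  have heR : ∀ (u : V) (h : ¬ u ∈ Aᶜ), e u = Sum.inr (eR ⟨u, h⟩) := by
    intro u h
    show (Equiv.sumCongr eL eR) ((Equiv.sumCompl _).symm u) = _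
    rw [show (Equiv.sumCompl (fun v => v ∈ Aᶜ)).symm u = Sum.inr ⟨u, h⟩ by
      simp only [Equiv.sumCompl, Equiv.coe_fn_symm_mk]
      rw [dif_neg h]]
    rfl
  refine ⟨⟨e, ?_⟩⟩
  intro u v
  by_cases hu : u ∈ Aᶜ <;> by_cases hv : v ∈ Aᶜ
  · rw [heL u hu, heL v hv]
    exact iff_of_false (by simp [completeBipartiteGraph]) (hBind u v hu hv)
  · rw [heL u hu, heR v hv]
    have hvA : v ∈ A := by simpa using hv
    exact iff_of_true (by simp [completeBipartiteGraph]) (hcross u v hu hvA)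
  · rw [heR u hu, heL v hv]
    have huA : u ∈ A := by simpa using hu
    exact iff_of_true (by simp [completeBipartiteGraph]) ((hcross v u hv huA).symm)
  · rw [heR u hu, heR v hv]
    have huA : u ∈ A := by simpa using hu
    have hvA : v ∈ A := by simpa using hv
    exact iff_of_false (by simp [completeBipartiteGraph]) (hAind u v huA hvA)

omit [Fintype V] in
lemma card_filter_prod_fst (A B : Finset V) (P : V × V → Prop) [DecidablePred P] :
    ((A ×ˢ B).filter P).card = ∑ a ∈ A, (B.filter (fun b => P (a, b))).card := by
  rw [Finset.card_eq_sum_card_fiberwise (f := Prod.fst) (t := A)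
    (by intro x hx; simp only [Finset.mem_coe, mem_filter, mem_product] at hx; exact hx.1.1)]
  refine Finset.sum_congr rfl (fun a ha => ?_)
  apply Finset.card_bij (fun p _ => p.2)
  · intro p hp
    simp only [mem_filter, mem_product] at hp ⊢
    refine ⟨hp.1.1.2, ?_⟩
    have : p = (a, p.2) := by rw [← hp.2]
    rw [← this]; exact hp.1.2
  · intro p hp q hq hpq
    simp only [mem_filter, mem_product] at hp hq
    exact Prod.ext (hp.2.trans hq.2.symm) hpq
  · intro b hb
    simp only [mem_filter, mem_product] at hb
    exact ⟨(a, b), by simp [hb.1, hb.2, ha], rfl⟩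

omit [Fintype V] in
lemma card_filter_prod_snd (A B : Finset V) (P : V × V → Prop) [DecidablePred P] :
    ((A ×ˢ B).filter P).card = ∑ b ∈ B, (A.filter (fun a => P (a, b))).card := by
  rw [Finset.card_eq_sum_card_fiberwise (f := Prod.snd) (t := B)
    (by intro x hx; simp only [Finset.mem_coe, mem_filter, mem_product] at hx; exact hx.1.2)]
  refine Finset.sum_congr rfl (fun b hb => ?_)
  apply Finset.card_bij (fun p _ => p.1)
  · intro p hp
    simp only [mem_filter, mem_product] at hp ⊢
    refine ⟨hp.1.1.1, ?_⟩
    have : p = (p.1, b) := by rw [← hp.2]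
    rw [← this]; exact hp.1.2
  · intro p hp q hq hpq
    simp only [mem_filter, mem_product] at hp hq
    exact Prod.ext hpq (hp.2.trans hq.2.symm)
  · intro a ha
    simp only [mem_filter, mem_product] at ha
    exact ⟨(a, b), by simp [ha.1, ha.2, hb], rfl⟩

lemma deg_split (A : Finset V) (b : V) :
    G.degree b = (A.filter (fun a => G.Adj a b)).card + (Aᶜ.filter (fun w => G.Adj b w)).card := by
  rw [← SimpleGraph.card_neighborFinset_eq_degree]
  rw [← Finset.card_union_of_disjoint (by
    refine Finset.disjoint_left.mpr ?_
    intro x hx hx'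
    have h1 := (Finset.mem_filter.mp hx).1
    have h2 := (Finset.mem_filter.mp hx').1
    rw [Finset.mem_compl] at h2
    exact h2 h1)]
  congr 1
  ext w
  simp only [SimpleGraph.mem_neighborFinset, Finset.mem_union, Finset.mem_filter,
    Finset.mem_compl]
  constructor
  · intro h
    by_cases hw : w ∈ A
    · exact Or.inl ⟨hw, h.symm⟩
    · exact Or.inr ⟨hw, h⟩
  · intro h
    rcases h with ⟨_, h⟩ | ⟨_, h⟩
    · exact h.symm
    · exact h

lemma counting (A : Finset V) (hAind : ∀ a ∈ A, ∀ b ∈ A, ¬ G.Adj a b) :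
    2 * G.edgeFinset.card
      + 2 * ((A ×ˢ Aᶜ).filter (fun p => ¬ G.Adj p.1 p.2)).card
    = 2 * (A.card * Aᶜ.card)
      + ((Aᶜ ×ˢ Aᶜ).filter (fun p => G.Adj p.1 p.2)).card := by
  classical
  have degA : ∀ a ∈ A, G.degree a = (Aᶜ.filter (fun w => G.Adj a w)).card := by
    intro a ha
    rw [deg_split G A a]
    have : (A.filter (fun x => G.Adj x a)) = ∅ := by
      apply Finset.filter_false_of_mem
      intro x hx
      exact hAind x hx a ha
    rw [this]
    simp
  -- eq1
  have hm := card_filter_prod_fst A Aᶜ (fun p => ¬ G.Adj p.1 p.2)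
  simp only at hm
  have eq1 : (∑ a ∈ A, G.degree a)
      + ((A ×ˢ Aᶜ).filter (fun p => ¬ G.Adj p.1 p.2)).card = A.card * Aᶜ.card := by
    rw [hm, Finset.sum_congr rfl degA, ← Finset.sum_add_distrib]
    rw [Finset.sum_congr rfl (fun a _ => Finset.card_filter_add_card_filter_not
      (s := Aᶜ) (p := fun w => G.Adj a w))]
    rw [Finset.sum_const, smul_eq_mul]
  -- eq2
  have hm2 := card_filter_prod_snd A Aᶜ (fun p => ¬ G.Adj p.1 p.2)
  simp only at hm2
  have eq2a : (∑ b ∈ Aᶜ, (A.filter (fun a => G.Adj a b)).card)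
      + ((A ×ˢ Aᶜ).filter (fun p => ¬ G.Adj p.1 p.2)).card = A.card * Aᶜ.card := by
    rw [hm2, ← Finset.sum_add_distrib]
    rw [Finset.sum_congr rfl (fun b _ => Finset.card_filter_add_card_filter_not
      (s := A) (p := fun a => G.Adj a b))]
    rw [Finset.sum_const, smul_eq_mul, mul_comm]
  have hm3 := card_filter_prod_fst Aᶜ Aᶜ (fun p => G.Adj p.1 p.2)
  simp only at hm3
  have eq2 : ∑ b ∈ Aᶜ, G.degree b
      = (∑ b ∈ Aᶜ, (A.filter (fun a => G.Adj a b)).card)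
      + ((Aᶜ ×ˢ Aᶜ).filter (fun p => G.Adj p.1 p.2)).card := by
    rw [hm3, ← Finset.sum_add_distrib]
    exact Finset.sum_congr rfl (fun b _ => deg_split G A b)
  have eq3 : (∑ a ∈ A, G.degree a) + (∑ b ∈ Aᶜ, G.degree b) = 2 * G.edgeFinset.card := by
    rw [← SimpleGraph.sum_degrees_eq_twice_card_edges, Finset.sum_add_sum_compl]
  omega

lemma deg_le (A : Finset V) (hfree : G.CliqueFree 3)
    (hmax : ∀ s : Finset V, (∀ a ∈ s, ∀ b ∈ s, ¬ G.Adj a b) → s.card ≤ A.card) :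
    ∀ v : V, G.degree v ≤ A.card := by
  intro v
  rw [← SimpleGraph.card_neighborFinset_eq_degree]
  apply hmax
  intro a ha b hb hab
  rw [SimpleGraph.mem_neighborFinset] at ha hb
  exact hfree {v, a, b} (SimpleGraph.is3Clique_triple_iff.mpr ⟨ha, hb, hab⟩)

lemma eB2_le_m (A : Finset V) (hdeg : ∀ v : V, G.degree v ≤ A.card) :
    ((Aᶜ ×ˢ Aᶜ).filter (fun p => G.Adj p.1 p.2)).card
      ≤ ((A ×ˢ Aᶜ).filter (fun p => ¬ G.Adj p.1 p.2)).card := by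
  classical
  have hm2 := card_filter_prod_snd A Aᶜ (fun p => ¬ G.Adj p.1 p.2)
  simp only at hm2
  have eq2a : (∑ b ∈ Aᶜ, (A.filter (fun a => G.Adj a b)).card)
      + ((A ×ˢ Aᶜ).filter (fun p => ¬ G.Adj p.1 p.2)).card = A.card * Aᶜ.card := by
    rw [hm2, ← Finset.sum_add_distrib]
    rw [Finset.sum_congr rfl (fun b _ => Finset.card_filter_add_card_filter_not
      (s := A) (p := fun a => G.Adj a b))]
    rw [Finset.sum_const, smul_eq_mul, mul_comm]
  have hm3 := card_filter_prod_fst Aᶜ Aᶜ (fun p => G.Adj p.1 p.2)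
  simp only at hm3
  have eq2 : ∑ b ∈ Aᶜ, G.degree b
      = (∑ b ∈ Aᶜ, (A.filter (fun a => G.Adj a b)).card)
      + ((Aᶜ ×ˢ Aᶜ).filter (fun p => G.Adj p.1 p.2)).card := by
    rw [hm3, ← Finset.sum_add_distrib]
    exact Finset.sum_congr rfl (fun b _ => deg_split G A b)
  have hle : ∑ b ∈ Aᶜ, G.degree b ≤ A.card * Aᶜ.card := by
    calc ∑ b ∈ Aᶜ, G.degree b ≤ ∑ _b ∈ Aᶜ, A.card := Finset.sum_le_sum (fun b _ => hdeg b)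
      _ = A.card * Aᶜ.card := by rw [Finset.sum_const, smul_eq_mul, mul_comm]
  omega

lemma miss_sum (A : Finset V) :
    ∑ b ∈ Aᶜ, (A.filter (fun a => ¬ G.Adj a b)).card
      = ((A ×ˢ Aᶜ).filter (fun p => ¬ G.Adj p.1 p.2)).card := by
  classical
  rw [card_filter_prod_snd A Aᶜ (fun p => ¬ G.Adj p.1 p.2)]

lemma miss_edge (A : Finset V) (hfree : G.CliqueFree 3) (b1 b2 : V) (hadj : G.Adj b1 b2) :
    A.card ≤ (A.filter (fun a => ¬ G.Adj a b1)).card + (A.filter (fun a => ¬ G.Adj a b2)).card := by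
  classical
  have hdisj : Disjoint (A.filter (fun a => G.Adj a b1)) (A.filter (fun a => G.Adj a b2)) := by
    refine Finset.disjoint_left.mpr ?_
    intro a ha hb
    have h1 := (Finset.mem_filter.mp ha).2
    have h2 := (Finset.mem_filter.mp hb).2
    exact hfree {a, b1, b2} (SimpleGraph.is3Clique_triple_iff.mpr ⟨h1, h2, hadj⟩)
  have hunion : (A.filter (fun a => G.Adj a b1)).card + (A.filter (fun a => G.Adj a b2)).card
      ≤ A.card := by
    rw [← Finset.card_union_of_disjoint hdisj]
    apply Finset.card_le_card
    intro x hx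
    rcases Finset.mem_union.mp hx with h | h
    · exact (Finset.mem_filter.mp h).1
    · exact (Finset.mem_filter.mp h).1
  have h1 := Finset.card_filter_add_card_filter_not (s := A) (p := fun a => G.Adj a b1)
  have h2 := Finset.card_filter_add_card_filter_not (s := A) (p := fun a => G.Adj a b2)
  omega

omit [Fintype V] in
lemma natmono' (x y nn : ℕ) (hxy : x ≤ y) (h2 : 2*y ≤ nn) : x*(nn-x) ≤ y*(nn-y) := by
  obtain ⟨d, rfl⟩ := Nat.exists_eq_add_of_le hxy
  obtain ⟨e, he⟩ : ∃ e, nn = (x + d) + e := ⟨nn - (x+d), by omega⟩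
  subst he
  have h1 : x + d + e - x = d + e := by omega
  have h3 : x + d + e - (x + d) = e := by omega
  rw [h1, h3]
  have hxe : x ≤ e := by omega
  calc x * (d + e) = x*d + x*e := by ring
    _ ≤ d*e + x*e := by have := Nat.mul_le_mul_left d hxe; nlinarith
    _ ≤ (x + d) * e := by ring_nf; omega

lemma trace_lemma (A B : Finset V) (hAB : B = Aᶜ)
    (hsz : A.card = B.card ∨ A.card = B.card + 1) (hB4 : 4 ≤ B.card)
    (hbad : ((A ×ˢ B).filter (fun p => ¬ G.Adj p.1 p.2)).card ≤ 2) :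
    ∃ (u w : V) (p : G.Walk u w), p.IsHamiltonian := by
  classical
  have hXA : (((A ×ˢ B).filter (fun p => ¬ G.Adj p.1 p.2)).image Prod.fst) ⊆ A := by
    intro x hx
    obtain ⟨p, hp, rfl⟩ := Finset.mem_image.mp hx
    exact ((Finset.mem_product.mp (Finset.mem_filter.mp hp).1)).1
  set bad := ((A ×ˢ B).filter (fun p => ¬ G.Adj p.1 p.2)) with hbaddef
  set X := bad.image Prod.fst with hXdef
  set Y := bad.image Prod.snd with hYdef
  have hX2 : X.card ≤ 2 := le_trans (Finset.card_image_le) hbad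
  have hY2 : Y.card ≤ 2 := le_trans (Finset.card_image_le) hbad
  have h2 : 1 < (B \ Y).card := by
    have := Finset.le_card_sdiff Y B
    omega
  obtain ⟨g1, hg1, g2, hg2, hg12⟩ := Finset.one_lt_card.mp h2
  have hg1B : g1 ∈ B := (Finset.mem_sdiff.mp hg1).1
  have hg2B : g2 ∈ B := (Finset.mem_sdiff.mp hg2).1
  have hadj : ∀ (a b : V), a ∈ A → b ∈ B → (a ∉ X ∨ b ∉ Y) → G.Adj a b := by
    intro a b ha hb hor
    by_contra hne
    have hmem : (a, b) ∈ bad :=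
      Finset.mem_filter.mpr ⟨Finset.mem_product.mpr ⟨ha, hb⟩, hne⟩
    rcases hor with h | h
    · exact h (Finset.mem_image.mpr ⟨(a,b), hmem, rfl⟩)
    · exact h (Finset.mem_image.mpr ⟨(a,b), hmem, rfl⟩)
  have hgsub : {g1, g2} ⊆ B := by
    intro x hx
    rcases Finset.mem_insert.mp hx with rfl | hx
    · exact hg1B
    · rw [Finset.mem_singleton.mp hx]; exact hg2B
  have hgcard : ({g1, g2} : Finset V).card = 2 := by
    rw [Finset.card_insert_of_notMem (by simp [hg12]), Finset.card_singleton]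
  have hLAlen : (X.toList ++ (A \ X).toList).length = A.card := by
    rw [List.length_append, Finset.length_toList, Finset.length_toList,
      Finset.card_sdiff_of_subset hXA]
    have := Finset.card_le_card hXA
    omega
  have hLBlen : (g1 :: g2 :: (B \ {g1, g2}).toList).length = B.card := by
    simp only [List.length_cons, Finset.length_toList, Finset.card_sdiff_of_subset hgsub, hgcard]
    have := Finset.card_le_card hgsub
    omega
  have memLA : ∀ v ∈ X.toList ++ (A \ X).toList, v ∈ A := by
    intro v hv
    rcases List.mem_append.mp hv with h | h
    · exact hXA (Finset.mem_toList.mp h)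
    · exact (Finset.mem_sdiff.mp (Finset.mem_toList.mp h)).1
  have memLB : ∀ v ∈ g1 :: g2 :: (B \ {g1, g2}).toList, v ∈ B := by
    intro v hv
    rcases List.mem_cons.mp hv with rfl | hv
    · exact hg1B
    · rcases List.mem_cons.mp hv with rfl | hv
      · exact hg2B
      · exact (Finset.mem_sdiff.mp (Finset.mem_toList.mp hv)).1
  have nodupLA : (X.toList ++ (A \ X).toList).Nodup := by
    refine List.Nodup.append (Finset.nodup_toList _) (Finset.nodup_toList _) ?_
    intro v hv hv'
    exact (Finset.mem_sdiff.mp (Finset.mem_toList.mp hv')).2 (Finset.mem_toList.mp hv)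
  have nodupLB : (g1 :: g2 :: (B \ {g1, g2}).toList).Nodup := by
    refine List.nodup_cons.mpr ⟨?_, List.nodup_cons.mpr ⟨?_, Finset.nodup_toList _⟩⟩
    · intro h
      rcases List.mem_cons.mp h with h | h
      · exact hg12 h
      · have := Finset.mem_toList.mp h
        simp at this
    · intro h
      have := Finset.mem_toList.mp h
      simp at this
  have hLA_clean : ∀ (i : ℕ) (h : i < (X.toList ++ (A \ X).toList).length), 2 ≤ i →
      (X.toList ++ (A \ X).toList)[i] ∉ X := by
    intro i h h2i
    have hXi : X.toList.length ≤ i := by rw [Finset.length_toList]; omega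
    rw [List.getElem_append_right hXi]
    intro hmem
    exact (Finset.mem_sdiff.mp (Finset.mem_toList.mp (List.getElem_mem _))).2 hmem
  have hLB_clean : ∀ (j : ℕ) (h : j < (g1 :: g2 :: (B \ {g1, g2}).toList).length), j < 2 →
      (g1 :: g2 :: (B \ {g1, g2}).toList)[j] ∉ Y := by
    intro j h hj2
    interval_cases j
    · exact (Finset.mem_sdiff.mp hg1).2
    · exact (Finset.mem_sdiff.mp hg2).2
  apply interleave_ham G (X.toList ++ (A \ X).toList) (g1 :: g2 :: (B \ {g1, g2}).toList) g1
  · rw [hLAlen, hLBlen]; exact hsz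
  · exact nodupLA
  · exact nodupLB
  · intro v hv hv'
    have h1 := memLA v hv
    have h2' := memLB v hv'
    rw [hAB] at h2'
    exact (Finset.mem_compl.mp h2') h1
  · rw [hLAlen, hLBlen, hAB, Finset.card_add_card_compl]
  · have := Finset.card_add_card_compl A
    rw [← hAB] at this
    omega
  · intro ja jb hja hjb h1 h2'
    by_cases hc : 2 ≤ ja
    · exact hadj _ _ (memLA _ (List.getElem_mem hja)) (memLB _ (List.getElem_mem hjb))
        (Or.inl (hLA_clean ja hja hc))
    · exact hadj _ _ (memLA _ (List.getElem_mem hja)) (memLB _ (List.getElem_mem hjb))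
        (Or.inr (hLB_clean jb hjb (by omega)))


/-- For `n ≥ 8`, an `n`-vertex triangle-free graph that is not traceable has at most
`e(K_{⌊n/2⌋-1,⌈n/2⌉+1})` edges (that is, `n²/4 - 1` edges for even `n` and `(n²-9)/4`
edges for odd `n`), and `K_{⌊n/2⌋-1,⌈n/2⌉+1}` is the unique extremal graph. -/
theorem triangleFree_not_traceable_edge_bound
    {V : Type} [Fintype V] [DecidableEq V]
    (G : SimpleGraph V) [DecidableRel G.Adj] (n : ℕ)
    (hn : 8 ≤ n) (hcard : Fintype.card V = n)
    (hfree : G.CliqueFree 3)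
    (hnt : ¬ ∃ (u w : V) (p : G.Walk u w), p.IsHamiltonian) :
    G.edgeFinset.card ≤ (n / 2 - 1) * ((n + 1) / 2 + 1) ∧
    (Even n → G.edgeFinset.card ≤ n ^ 2 / 4 - 1) ∧
    (Odd n → G.edgeFinset.card ≤ (n ^ 2 - 9) / 4) ∧
    (G.edgeFinset.card = (n / 2 - 1) * ((n + 1) / 2 + 1) →
      Nonempty (G ≃g
        completeBipartiteGraph (Fin (n / 2 - 1)) (Fin ((n + 1) / 2 + 1)))) := by
  classical
  obtain ⟨A, hAmem, hAmax'⟩ := Finset.exists_max_image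
    ((univ : Finset (Finset V)).filter (fun s => ∀ a ∈ s, ∀ b ∈ s, ¬ G.Adj a b))
    Finset.card ⟨∅, by simp⟩
  have hAind : ∀ a ∈ A, ∀ b ∈ A, ¬ G.Adj a b := (Finset.mem_filter.mp hAmem).2
  have hαmax : ∀ s : Finset V, (∀ a ∈ s, ∀ b ∈ s, ¬ G.Adj a b) → s.card ≤ A.card :=
    fun s hs => hAmax' s (Finset.mem_filter.mpr ⟨Finset.mem_univ s, hs⟩)
  have hid := counting G A hAind
  have hdeg := deg_le G A hfree hαmax
  have he2m := eB2_le_m G A hdeg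
  have hαβ : A.card + Aᶜ.card = n := by rw [Finset.card_add_card_compl, hcard]
  have hα1 : 1 ≤ A.card := by
    obtain ⟨v⟩ := Fintype.card_pos_iff.mp (by omega : 0 < Fintype.card V)
    have := hαmax {v} (by
      intro a ha b hb
      rw [Finset.mem_singleton] at ha hb
      subst ha; subst hb
      exact G.irrefl)
    simpa using this
  have hk4 : 4 ≤ n / 2 := by omega
  set k := n / 2 with hkdef
  set K := n - n / 2 with hKdef
  have hkK : k + K = n := by omega
  have hKk1 : K ≤ k + 1 := by omega
  have hkK' : k ≤ K := by omega
  set E := G.edgeFinset.card with hEdef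
  set m := ((A ×ˢ Aᶜ).filter (fun p => ¬ G.Adj p.1 p.2)).card with hmdef
  set e2 := ((Aᶜ ×ˢ Aᶜ).filter (fun p => G.Adj p.1 p.2)).card with he2def
  have hEαβ : 2 * E + m ≤ 2 * (A.card * Aᶜ.card) := by omega
  obtain ⟨k', hk'⟩ : ∃ k', k = k' + 1 := ⟨k - 1, by omega⟩
  have hmain : E ≤ (k-1)*(K+1) ∧ (E = (k-1)*(K+1) →
      Nonempty (G ≃g completeBipartiteGraph (Fin (n / 2 - 1)) (Fin ((n + 1) / 2 + 1)))) := by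
    rcases lt_trichotomy A.card K with hC | hB | hA2
    -- ===== Case C : α ≤ K - 1 : show (k-1)*(K+1) ≤ E → False =====
    · have hfalse : (k-1)*(K+1) ≤ E → False := by
        intro hEb
        have hBne : ¬ (∀ a ∈ Aᶜ, ∀ b ∈ Aᶜ, ¬ G.Adj a b) := by
          intro h
          have := hαmax Aᶜ h
          omega
        push_neg at hBne
        obtain ⟨b1, hb1, b2, hb2, hadj12⟩ := hBne
        have hb12ne : b1 ≠ b2 := G.ne_of_adj hadj12
        have hpairsum : (A.filter (fun a => ¬ G.Adj a b1)).card
            + (A.filter (fun a => ¬ G.Adj a b2)).card ≤ m := by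
          rw [hmdef, ← miss_sum G A]
          calc (A.filter (fun a => ¬ G.Adj a b1)).card + (A.filter (fun a => ¬ G.Adj a b2)).card
              = ∑ b ∈ ({b1, b2} : Finset V), (A.filter (fun a => ¬ G.Adj a b)).card := by
                rw [Finset.sum_pair hb12ne]
            _ ≤ ∑ b ∈ Aᶜ, (A.filter (fun a => ¬ G.Adj a b)).card := by
                apply Finset.sum_le_sum_of_subset
                intro x hx
                rcases Finset.mem_insert.mp hx with rfl | hx
                · exact hb1
                · rw [Finset.mem_singleton.mp hx]; exact hb2
        have hαm : A.card ≤ m := le_trans (miss_edge G A hfree b1 b2 hadj12) hpairsum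
        by_cases hsub : A.card ≤ k - 1
        · have hprod : A.card * Aᶜ.card ≤ (k-1)*(K+1) := by
            have h0 := natmono' A.card (k-1) n hsub (by omega)
            have e1 : n - A.card = Aᶜ.card := by omega
            have e2' : n - (k-1) = K+1 := by omega
            rw [e1, e2'] at h0
            exact h0
          omega
        · have hαk : A.card = k := by omega
          have hKk : K = k + 1 := by omega
          have ht : (k-1)*(K+1) + 2 = k * K := by
            rw [hKk, hk']
            have h : k' + 1 - 1 = k' := by omega
            rw [h]
            ring
          have hβK : Aᶜ.card = K := by omega
          have hprodQ : A.card * Aᶜ.card = k * K := by rw [hαk, hβK]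
          have hk4' : k ≤ 4 := by omega
          have hkeq : k = 4 := by omega
          have hK5 : K = 5 := by omega
          have hc20 : k * K = 20 := by rw [hkeq, hK5]
          have hα4 : A.card = 4 := by omega
          have hm4 : m = 4 := by omega
          have hE18 : E = 18 := by omega
          have he24 : e2 = 4 := by omega
          have hT : ¬ ((Aᶜ ×ˢ Aᶜ).filter (fun p => G.Adj p.1 p.2)
              ⊆ ({(b1, b2), (b2, b1)} : Finset (V × V))) := by
            intro hsub'
            have hcc := Finset.card_le_card hsub'
            have hc2 : (({(b1, b2), (b2, b1)} : Finset (V × V))).card ≤ 2 :=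
              le_trans (Finset.card_insert_le _ _) (by simp)
            omega
          obtain ⟨p, hpS, hpT⟩ := Finset.not_subset.mp hT
          obtain ⟨hpmem, hpadj⟩ := Finset.mem_filter.mp hpS
          obtain ⟨hpu, hpv⟩ := Finset.mem_product.mp hpmem
          have key2 : ∀ (x y : V), x ∈ Aᶜ → y ∈ Aᶜ → G.Adj x y → x ≠ b1 → x ≠ b2 → False := by
            intro x y hx hy hxy hx1 hx2
            have htrip : (A.filter (fun a => ¬ G.Adj a b1)).card
                + (A.filter (fun a => ¬ G.Adj a b2)).card
                + (A.filter (fun a => ¬ G.Adj a x)).card ≤ m := by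
              rw [hmdef, ← miss_sum G A]
              calc (A.filter (fun a => ¬ G.Adj a b1)).card
                  + (A.filter (fun a => ¬ G.Adj a b2)).card
                  + (A.filter (fun a => ¬ G.Adj a x)).card
                  = ∑ b ∈ ({b1, b2, x} : Finset V),
                    (A.filter (fun a => ¬ G.Adj a b)).card := by
                    rw [show ({b1, b2, x} : Finset V) = insert x {b1, b2} by
                      ext w; simp; tauto]
                    rw [Finset.sum_insert (by simp [hx1, hx2]), Finset.sum_pair hb12ne]
                    ring
                _ ≤ ∑ b ∈ Aᶜ, (A.filter (fun a => ¬ G.Adj a b)).card := by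
                    apply Finset.sum_le_sum_of_subset
                    intro w hw
                    simp only [Finset.mem_insert, Finset.mem_singleton] at hw
                    rcases hw with rfl | rfl | rfl
                    · exact hb1
                    · exact hb2
                    · exact hx
            have hme12 := miss_edge G A hfree b1 b2 hadj12
            have hmx0 : (A.filter (fun a => ¬ G.Adj a x)).card = 0 := by omega
            have hmy := miss_edge G A hfree x y hxy
            have hmyle : (A.filter (fun a => ¬ G.Adj a y)).card ≤ m := by
              rw [hmdef, ← miss_sum G A]
              exact Finset.single_le_sum
                (f := fun b => (A.filter (fun a => ¬ G.Adj a b)).card)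
                (fun i _ => Nat.zero_le _) hy
            have hmy4 : (A.filter (fun a => ¬ G.Adj a y)).card = 4 := by omega
            have hfA : A.filter (fun a => ¬ G.Adj a y) = A := by
              apply Finset.eq_of_subset_of_card_le (Finset.filter_subset _ _)
              omega
            have hyadj : ∀ a ∈ A, ¬ G.Adj a y := by
              intro a ha
              have : a ∈ A.filter (fun a => ¬ G.Adj a y) := by rw [hfA]; exact ha
              exact (Finset.mem_filter.mp this).2
            have hyA : y ∉ A := Finset.mem_compl.mp hy
            have hind : ∀ a ∈ insert y A, ∀ b ∈ insert y A, ¬ G.Adj a b := by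
              intro a ha b hb hadj'
              rcases Finset.mem_insert.mp ha with ha1 | ha2 <;>
                rcases Finset.mem_insert.mp hb with hb1 | hb2
              · rw [ha1, hb1] at hadj'; exact G.irrefl hadj'
              · rw [ha1] at hadj'; exact hyadj b hb2 hadj'.symm
              · rw [hb1] at hadj'; exact hyadj a ha2 hadj'
              · exact hAind a ha2 b hb2 hadj'
            have hcard5 := hαmax _ hind
            rw [Finset.card_insert_of_notMem hyA] at hcard5
            omega
          have houtside : (p.1 ≠ b1 ∧ p.1 ≠ b2) ∨ (p.2 ≠ b1 ∧ p.2 ≠ b2) := by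
            by_contra hcon
            push_neg at hcon
            obtain ⟨h1, h2⟩ := hcon
            have hne := G.ne_of_adj hpadj
            simp only [Finset.mem_insert, Finset.mem_singleton] at hpT
            push_neg at hpT
            obtain ⟨hT1, hT2⟩ := hpT
            by_cases e1 : p.1 = b1
            · by_cases f1 : p.2 = b1
              · exact hne (e1.trans f1.symm)
              · exact hT1 (Prod.ext e1 (h2 f1))
            · have e1' := h1 e1
              by_cases f1 : p.2 = b1
              · exact hT2 (Prod.ext e1' f1)
              · exact hne (e1'.trans (h2 f1).symm)
          rcases houtside with ⟨h1, h2⟩ | ⟨h1, h2⟩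
          · exact key2 p.1 p.2 hpu hpv hpadj h1 h2
          · exact key2 p.2 p.1 hpv hpu hpadj.symm h1 h2
      refine ⟨?_, fun hEq => absurd (hfalse (le_of_eq hEq.symm)) (fun h => h)⟩
      by_contra hEb
      push_neg at hEb
      exact hfalse (by omega)
    -- ===== Case B : α = K =====
    · have hβk : Aᶜ.card = k := by omega
      have hfalse : (k-1)*(K+1) ≤ E → False := by
        intro hEb
        have hexp : k' * (K+1) + (K + 1) = K * k + k := by rw [hk']; ring
        have hboundeq : (k-1)*(K+1) = k' * (K+1) := by
          rw [hk']
          have h : k' + 1 - 1 = k' := by omega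
          rw [h]
        have hprodQ : A.card * Aᶜ.card = K * k := by rw [hB, hβk]
        have hnoB : ∀ a ∈ Aᶜ, ∀ b ∈ Aᶜ, ¬ G.Adj a b := by
          intro b1 hb1 b2 hb2 hadj12
          have hb12ne : b1 ≠ b2 := G.ne_of_adj hadj12
          have hpairsum : (A.filter (fun a => ¬ G.Adj a b1)).card
              + (A.filter (fun a => ¬ G.Adj a b2)).card ≤ m := by
            rw [hmdef, ← miss_sum G A]
            calc (A.filter (fun a => ¬ G.Adj a b1)).card
                + (A.filter (fun a => ¬ G.Adj a b2)).card
                = ∑ b ∈ ({b1, b2} : Finset V), (A.filter (fun a => ¬ G.Adj a b)).card := by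
                  rw [Finset.sum_pair hb12ne]
              _ ≤ ∑ b ∈ Aᶜ, (A.filter (fun a => ¬ G.Adj a b)).card := by
                  apply Finset.sum_le_sum_of_subset
                  intro x hx
                  rcases Finset.mem_insert.mp hx with rfl | hx
                  · exact hb1
                  · rw [Finset.mem_singleton.mp hx]; exact hb2
          have hαm : A.card ≤ m := le_trans (miss_edge G A hfree b1 b2 hadj12) hpairsum
          omega
        have he20 : e2 = 0 := by
          rw [he2def, Finset.card_eq_zero, Finset.filter_eq_empty_iff]
          intro p hp
          obtain ⟨h1, h2⟩ := Finset.mem_product.mp hp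
          exact hnoB p.1 h1 p.2 h2
        have hm2 : m ≤ 2 := by omega
        exact hnt (trace_lemma G A Aᶜ rfl (by omega) (by omega) (by rw [← hmdef]; omega))
      refine ⟨?_, fun hEq => absurd (hfalse (le_of_eq hEq.symm)) (fun h => h)⟩
      by_contra hEb
      push_neg at hEb
      exact hfalse (by omega)
    -- ===== Case A : α ≥ K + 1 =====
    · have hβ : Aᶜ.card ≤ k - 1 := by omega
      have hprod : A.card * Aᶜ.card ≤ (k-1)*(K+1) := by
        have h0 := natmono' Aᶜ.card (k-1) n hβ (by omega)
        have e1 : n - Aᶜ.card = A.card := by omega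
        have e2' : n - (k-1) = K + 1 := by omega
        rw [e1, e2'] at h0
        calc A.card * Aᶜ.card = Aᶜ.card * A.card := mul_comm _ _
          _ ≤ _ := h0
      refine ⟨by omega, ?_⟩
      intro hEq
      have hm0 : m = 0 := by omega
      have hQ : A.card * Aᶜ.card = (k-1)*(K+1) := by omega
      have he20 : e2 = 0 := by omega
      have hβeq : Aᶜ.card = k - 1 := by
        by_contra hne
        have hβ2 : Aᶜ.card ≤ k - 2 := by omega
        have h0 := natmono' Aᶜ.card (k-2) n hβ2 (by omega)
        have e1 : n - Aᶜ.card = A.card := by omega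
        have e2' : n - (k-2) = K + 2 := by omega
        rw [e1, e2'] at h0
        have hlt : (k-2)*(K+2) + 1 ≤ (k-1)*(K+1) := by
          obtain ⟨k'', hk''⟩ : ∃ k'', k = k'' + 2 := ⟨k-2, by omega⟩
          rw [hk'']
          have e3 : k'' + 2 - 2 = k'' := by omega
          have e4 : k'' + 2 - 1 = k'' + 1 := by omega
          rw [e3, e4]
          have hkK2 : k'' ≤ K := by omega
          have q1 : k''*(K+2) = k''*K + 2*k'' := by ring
          have q2 : (k''+1)*(K+1) = k''*K + k'' + K + 1 := by ring
          omega
        have hcm : A.card * Aᶜ.card = Aᶜ.card * A.card := mul_comm _ _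
        omega
      have hαeq : A.card = K + 1 := by omega
      have hcross : ∀ u v, u ∈ Aᶜ → v ∈ A → G.Adj u v := by
        intro u v hu hv
        by_contra hne
        have hmem : (v, u) ∈ (A ×ˢ Aᶜ).filter (fun p => ¬ G.Adj p.1 p.2) :=
          Finset.mem_filter.mpr ⟨Finset.mem_product.mpr ⟨hv, hu⟩, fun h => hne h.symm⟩
        have := Finset.card_pos.mpr ⟨_, hmem⟩
        omega
      have hBind : ∀ u v, u ∈ Aᶜ → v ∈ Aᶜ → ¬ G.Adj u v := by
        intro u v hu hv hne
        have hmem : (u, v) ∈ (Aᶜ ×ˢ Aᶜ).filter (fun p => G.Adj p.1 p.2) :=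
          Finset.mem_filter.mpr ⟨Finset.mem_product.mpr ⟨hu, hv⟩, hne⟩
        have := Finset.card_pos.mpr ⟨_, hmem⟩
        omega
      exact iso_cbg G A (n/2 - 1) ((n+1)/2 + 1) (by omega) (by omega)
        hcross (fun u v hu hv => hAind u hu v hv) hBind
  obtain ⟨hbound, hiso⟩ := hmain
  have hbe : (n / 2 - 1) * ((n + 1) / 2 + 1) = (k-1)*(K+1) := by
    rw [show (n+1)/2 = K by omega]
  refine ⟨by rw [hbe]; exact hbound, ?_, ?_, fun h => hiso (by rw [← hbe]; exact h)⟩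
  · intro hev
    have hnk : n = 2 * k := by
      have := Nat.even_iff.mp hev
      omega
    have hKk : K = k := by omega
    have h1 : n ^ 2 = 4 * (k * k) := by rw [hnk]; ring
    have h2 : (k-1)*(K+1) + 1 = k * k := by
      rw [hKk, hk']
      have h : k' + 1 - 1 = k' := by omega
      rw [h]
      ring
    omega
  · intro hodd
    have hnk : n = 2 * k + 1 := by
      have := Nat.odd_iff.mp hodd
      omega
    have hKk : K = k + 1 := by omega
    have h1 : n ^ 2 = 4 * (k * k) + 4 * k + 1 := by rw [hnk]; ring
    have h2 : (k-1)*(K+1) + 2 = k * k + k := by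
      rw [hKk, hk']
      have h : k' + 1 - 1 = k' := by omega
      rw [h]
      ring
    omega
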